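/- For every natural number n, let T_n be the Kantorovič operator K_n regarded as a continuous linear endomorphism of the complex Banach space L¹([0,1],ℂ) (i.e., T_n f is the equivalence class of the continuous function x ↦ (n+1) Σ_{k=0}^n C(n,k) x^k (1−x)^{n−k} ∫_{k/(n+1)}^{(k+1)/(n+1)} f(t) dt). Then the spectrum of T_n satisfies σ(T_n) ⊆ {λ ∈ ℂ : |λ| < 1} ∪ {1}. -/

import Mathlib

open MeasureTheory Set

noncomputable section KantAux

namespace KantAux

abbrev μ01 : Measure ℝ := volume.restrict (Set.Icc (0:ℝ) 1)

abbrev E1 := Lp ℂ 1 μ01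

/-- real Bernstein basis polynomial -/
def pR (n k : ℕ) : ℝ → ℝ := fun x => (n.choose k : ℝ) * x ^ k * (1 - x) ^ (n - k)

/-- complex Bernstein basis polynomial -/
def pC (n k : ℕ) : ℝ → ℂ := fun x => (n.choose k : ℂ) * (x:ℂ) ^ k * (1 - (x:ℂ)) ^ (n - k)

lemma pC_eq (n k : ℕ) (x : ℝ) : pC n k x = ((pR n k x : ℝ) : ℂ) := by
  simp only [pC, pR]; push_cast; ring

lemma continuous_pC (n k : ℕ) : Continuous (pC n k) := by
  unfold pC; fun_prop

lemma continuous_pR (n k : ℕ) : Continuous (pR n k) := by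
  unfold pR; fun_prop

lemma integrable_pC (n k : ℕ) : Integrable (pC n k) μ01 :=
  (continuous_pC n k).integrableOn_Icc

lemma integrable_pR (n k : ℕ) : Integrable (pR n k) μ01 :=
  (continuous_pR n k).integrableOn_Icc

def bfun (n k : ℕ) : E1 := (integrable_pC n k).toL1 _

lemma bfun_coe (n k : ℕ) : (bfun n k : ℝ → ℂ) =ᵐ[μ01] pC n k :=
  (integrable_pC n k).coeFn_toL1

/-- the k-th subinterval -/
def Ik (n k : ℕ) : Set ℝ := Set.Ioc ((k:ℝ)/((n:ℝ)+1)) (((k:ℝ)+1)/((n:ℝ)+1))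

lemma Ik_subset (n k : ℕ) (hk : k ≤ n) : Ik n k ⊆ Set.Icc (0:ℝ) 1 := by
  intro x hx
  obtain ⟨h1, h2⟩ := hx
  have hn : (0:ℝ) < (n:ℝ) + 1 := by positivity
  constructor
  · have : (0:ℝ) ≤ (k:ℝ)/((n:ℝ)+1) := by positivity
    linarith
  · have : ((k:ℝ)+1)/((n:ℝ)+1) ≤ 1 := by
      rw [div_le_one hn]
      have : (k:ℝ) ≤ (n:ℝ) := by exact_mod_cast hk
      linarith
    linarith

/-- integral over a set as a continuous linear functional on L¹ -/
def setIntL (s : Set ℝ) : E1 →L[ℂ] ℂ :=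
  LinearMap.mkContinuous
    { toFun := fun f => ∫ t in s, (f : ℝ → ℂ) t ∂μ01
      map_add' := fun f g => by
        have h1 : IntegrableOn (f : ℝ → ℂ) s μ01 := (L1.integrable_coeFn f).integrableOn
        have h2 : IntegrableOn (g : ℝ → ℂ) s μ01 := (L1.integrable_coeFn g).integrableOn
        have hae : ((f + g : E1) : ℝ → ℂ) =ᵐ[μ01.restrict s]
            ((f : ℝ → ℂ) + (g : ℝ → ℂ)) := ae_restrict_of_ae (Lp.coeFn_add f g)
        rw [show (∫ t in s, ((f + g : E1) : ℝ → ℂ) t ∂μ01)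
            = ∫ t in s, ((f : ℝ → ℂ) t + (g : ℝ → ℂ) t) ∂μ01 from integral_congr_ae hae]
        exact integral_add h1 h2
      map_smul' := fun c f => by
        have hae : ((c • f : E1) : ℝ → ℂ) =ᵐ[μ01.restrict s]
            (fun t => c * (f : ℝ → ℂ) t) := ae_restrict_of_ae (Lp.coeFn_smul c f)
        rw [show (∫ t in s, ((c • f : E1) : ℝ → ℂ) t ∂μ01)
            = ∫ t in s, c * (f : ℝ → ℂ) t ∂μ01 from integral_congr_ae hae]
        simp [integral_const_mul] }
    1
    (fun f => by
      have h1 : ‖∫ t in s, (f : ℝ → ℂ) t ∂μ01‖ ≤ ∫ t in s, ‖(f : ℝ → ℂ) t‖ ∂μ01 :=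
        norm_integral_le_integral_norm _
      have h2 : (∫ t in s, ‖(f : ℝ → ℂ) t‖ ∂μ01) ≤ ∫ t, ‖(f : ℝ → ℂ) t‖ ∂μ01 :=
        setIntegral_le_integral (L1.integrable_coeFn f).norm
          (ae_of_all _ (fun t => norm_nonneg _))
      have h3 : (∫ t, ‖(f : ℝ → ℂ) t‖ ∂μ01) = ‖f‖ := (L1.norm_eq_integral_norm f).symm
      rw [one_mul]
      exact le_of_le_of_eq (h1.trans h2) h3)

lemma setIntL_apply (s : Set ℝ) (f : E1) :
    setIntL s f = ∫ t in s, (f : ℝ → ℂ) t ∂μ01 := rfl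

/-- the functionals of the Kantorovič operator -/
def phi (n k : ℕ) : E1 →L[ℂ] ℂ := (((n:ℂ)+1)) • setIntL (Ik n k)

lemma phi_apply (n k : ℕ) (f : E1) :
    phi n k f = ((n:ℂ)+1) * ∫ t in Ik n k, (f : ℝ → ℂ) t ∂μ01 := rfl

/-- the matrix of the Kantorovič operator -/
def Amat (n k j : ℕ) : ℝ := ((n:ℝ)+1) * ∫ t in Ik n k, pR n j t ∂μ01

lemma phi_bfun (n k j : ℕ) : phi n k (bfun n j) = (Amat n k j : ℂ) := by
  rw [phi_apply, Amat]
  have hae : ((bfun n j : E1) : ℝ → ℂ) =ᵐ[μ01.restrict (Ik n k)] pC n j :=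
    ae_restrict_of_ae (bfun_coe n j)
  rw [integral_congr_ae hae]
  have : (∫ t in Ik n k, pC n j t ∂μ01) = ((∫ t in Ik n k, pR n j t ∂μ01 : ℝ) : ℂ) := by
    rw [show (fun t => pC n j t) = fun t => ((pR n j t : ℝ) : ℂ) from funext (pC_eq n j)]
    exact integral_ofReal
  rw [this]
  push_cast
  ring

lemma sum_pR (n : ℕ) (t : ℝ) : ∑ j ∈ Finset.range (n+1), pR n j t = 1 := by
  have h := add_pow t (1-t) n
  have h2 : t + (1-t) = 1 := by ring
  rw [h2, one_pow] at h
  rw [h]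
  refine Finset.sum_congr rfl (fun j _ => ?_)
  simp [pR]; ring

lemma measure_Ik (n k : ℕ) (hk : k ≤ n) :
    μ01 (Ik n k) = ENNReal.ofReal (1/((n:ℝ)+1)) := by
  have hsub : Ik n k ⊆ Set.Icc (0:ℝ) 1 := Ik_subset n k hk
  have hIk : MeasurableSet (Ik n k) := measurableSet_Ioc
  rw [show μ01 (Ik n k) = volume (Ik n k ∩ Set.Icc (0:ℝ) 1) from
    Measure.restrict_apply hIk]
  rw [Set.inter_eq_self_of_subset_left hsub]
  rw [Ik, Real.volume_Ioc]
  congr 1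
  have hn : ((n:ℝ)+1) ≠ 0 := by positivity
  field_simp
  ring

lemma Amat_row_sum (n k : ℕ) (hk : k ≤ n) :
    ∑ j ∈ Finset.range (n+1), Amat n k j = 1 := by
  have hint : ∀ j ∈ Finset.range (n+1), IntegrableOn (pR n j) (Ik n k) μ01 :=
    fun j _ => (integrable_pR n j).integrableOn
  have : ∑ j ∈ Finset.range (n+1), Amat n k j
      = ((n:ℝ)+1) * ∫ t in Ik n k, (∑ j ∈ Finset.range (n+1), pR n j t) ∂μ01 := by
    rw [integral_finset_sum _ hint, Finset.mul_sum]
    rfl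
  rw [this]
  have : (∫ t in Ik n k, (∑ j ∈ Finset.range (n+1), pR n j t) ∂μ01)
      = ∫ t in Ik n k, (1:ℝ) ∂μ01 := by
    congr 1; funext t; exact sum_pR n t
  rw [this, setIntegral_const, measureReal_def, measure_Ik n k hk]
  have hn : (0:ℝ) < (n:ℝ)+1 := by positivity
  rw [ENNReal.toReal_ofReal (by positivity)]
  rw [smul_eq_mul, mul_one]; field_simp

lemma pR_nonneg (n j : ℕ) {t : ℝ} (ht : t ∈ Set.Icc (0:ℝ) 1) : 0 ≤ pR n j t := by
  obtain ⟨h0, h1⟩ := ht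
  unfold pR
  have : (0:ℝ) ≤ 1 - t := by linarith
  positivity

lemma Amat_nonneg (n k j : ℕ) : 0 ≤ Amat n k j := by
  unfold Amat
  have hn : (0:ℝ) ≤ (n:ℝ)+1 := by positivity
  refine mul_nonneg hn ?_
  refine integral_nonneg_of_ae ?_
  have hmem : ∀ᵐ t ∂μ01, t ∈ Set.Icc (0:ℝ) 1 := ae_restrict_mem measurableSet_Icc
  exact ae_restrict_of_ae (hmem.mono (fun t ht => pR_nonneg n j ht))

lemma Amat_diag_pos (n k : ℕ) (hk : k ≤ n) : 0 < Amat n k k := by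
  unfold Amat
  have hn : (0:ℝ) < (n:ℝ)+1 := by positivity
  refine mul_pos hn ?_
  have hres : μ01.restrict (Ik n k) = volume.restrict (Ik n k) := by
    have hIk : MeasurableSet (Ik n k) := measurableSet_Ioc
    rw [show μ01.restrict (Ik n k) = volume.restrict (Ik n k ∩ Set.Icc (0:ℝ) 1) from
      Measure.restrict_restrict hIk,
      Set.inter_eq_self_of_subset_left (Ik_subset n k hk)]
  have hab : (k:ℝ)/((n:ℝ)+1) < ((k:ℝ)+1)/((n:ℝ)+1) := by
    apply div_lt_div_of_pos_right (by linarith) hn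
  have heq : (∫ t in Ik n k, pR n k t ∂μ01)
      = ∫ t in ((k:ℝ)/((n:ℝ)+1))..(((k:ℝ)+1)/((n:ℝ)+1)), pR n k t := by
    calc (∫ t in Ik n k, pR n k t ∂μ01)
        = ∫ t, pR n k t ∂(μ01.restrict (Ik n k)) := rfl
      _ = ∫ t, pR n k t ∂(volume.restrict (Ik n k)) := by rw [hres]
      _ = ∫ t in ((k:ℝ)/((n:ℝ)+1))..(((k:ℝ)+1)/((n:ℝ)+1)), pR n k t :=
          (intervalIntegral.integral_of_le hab.le).symm
  rw [heq]
  apply intervalIntegral.intervalIntegral_pos_of_pos_on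
  · exact (continuous_pR n k).intervalIntegrable _ _
  · intro x hx
    obtain ⟨hx1, hx2⟩ := hx
    have ha0 : (0:ℝ) ≤ (k:ℝ)/((n:ℝ)+1) := by positivity
    have hx0 : 0 < x := lt_of_le_of_lt ha0 hx1
    have hb1 : ((k:ℝ)+1)/((n:ℝ)+1) ≤ 1 := by
      rw [div_le_one hn]
      have : (k:ℝ) ≤ (n:ℝ) := by exact_mod_cast hk
      linarith
    have hx1' : x < 1 := lt_of_lt_of_le hx2 hb1
    have hc : (0:ℝ) < (n.choose k : ℝ) := by
      exact_mod_cast Nat.choose_pos hk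
    have h1x : (0:ℝ) < 1 - x := by linarith
    unfold pR
    positivity
  · exact hab


/-- endpoints are ordered -/
lemma endpoint_lt (n k : ℕ) : (k:ℝ)/((n:ℝ)+1) < ((k:ℝ)+1)/((n:ℝ)+1) := by
  have hn : (0:ℝ) < (n:ℝ)+1 := by positivity
  apply div_lt_div_of_pos_right (by linarith) hn

lemma phi_eq_interval (n k : ℕ) (f : E1) :
    phi n k f = ((n:ℂ)+1) *
      ∫ t in ((k:ℝ)/((n:ℝ)+1))..(((k:ℝ)+1)/((n:ℝ)+1)), (f : ℝ → ℂ) t ∂μ01 := by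
  rw [phi_apply, intervalIntegral.integral_of_le (endpoint_lt n k).le]
  rfl

/-- Perron–Frobenius style lemma: an eigenvalue of norm at least one of a
positive row-stochastic matrix equals one. -/
lemma perron (m : ℕ) (A : Fin (m+1) → Fin (m+1) → ℝ)
    (h0 : ∀ k j, 0 ≤ A k j) (hd : ∀ k, 0 < A k k) (hs : ∀ k, ∑ j, A k j = 1)
    {lam : ℂ} (hlam : 1 ≤ ‖lam‖) {v : Fin (m+1) → ℂ} (hv : v ≠ 0)
    (heig : ∀ k, ∑ j, (A k j : ℂ) * v j = lam * v k) : lam = 1 := by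
  obtain ⟨k, -, hmax⟩ := Finset.exists_max_image Finset.univ (fun j => ‖v j‖)
    ⟨0, Finset.mem_univ 0⟩
  have hmax' : ∀ j, ‖v j‖ ≤ ‖v k‖ := fun j => hmax j (Finset.mem_univ j)
  have hvk : 0 < ‖v k‖ := by
    rcases lt_or_ge 0 (‖v k‖) with h | h
    · exact h
    · exfalso
      apply hv
      funext j
      exact norm_le_zero_iff.mp ((hmax' j).trans h)
  have hstep : ‖lam‖ * ‖v k‖ ≤ ‖v k‖ := by
    calc ‖lam‖ * ‖v k‖ = ‖lam * v k‖ := (norm_mul _ _).symm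
      _ = ‖∑ j, (A k j : ℂ) * v j‖ := by rw [heig k]
      _ ≤ ∑ j, ‖(A k j : ℂ) * v j‖ := norm_sum_le _ _
      _ = ∑ j, A k j * ‖v j‖ := by
          refine Finset.sum_congr rfl fun j _ => ?_
          rw [norm_mul, Complex.norm_real, Real.norm_of_nonneg (h0 k j)]
      _ ≤ ∑ j, A k j * ‖v k‖ :=
          Finset.sum_le_sum fun j _ => mul_le_mul_of_nonneg_left (hmax' j) (h0 k j)
      _ = ‖v k‖ := by rw [← Finset.sum_mul, hs k, one_mul]
  have hlam1 : ‖lam‖ = 1 :=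
    le_antisymm ((mul_le_iff_le_one_left hvk).mp hstep) hlam
  -- second step : the real part of lam equals 1
  have hre_ofReal_mul : ∀ (a : ℝ) (z : ℂ), ((a:ℂ) * z).re = a * z.re := by
    intro a z; simp [Complex.mul_re]
  set r : Fin (m+1) → ℝ := fun j => ((starRingEnd ℂ) (lam * v k) * v j).re with hr
  have hsum : ∑ j, A k j * r j = ‖v k‖^2 := by
    have h1 : ((starRingEnd ℂ) (lam * v k) * (lam * v k)) = ((Complex.normSq (lam * v k) : ℝ) : ℂ) := by
      rw [mul_comm, Complex.mul_conj]
    have h2 : ((starRingEnd ℂ) (lam * v k) * ∑ j, (A k j : ℂ) * v j)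
        = ∑ j, (A k j : ℂ) * ((starRingEnd ℂ) (lam * v k) * v j) := by
      rw [Finset.mul_sum]
      exact Finset.sum_congr rfl fun j _ => by ring
    have h3 : (((Complex.normSq (lam * v k) : ℝ) : ℂ)).re = ‖v k‖^2 := by
      rw [Complex.ofReal_re, Complex.normSq_eq_norm_sq, norm_mul,
        hlam1, one_mul]
    calc ∑ j, A k j * r j = (∑ j, (A k j : ℂ) * ((starRingEnd ℂ) (lam * v k) * v j)).re := by
          rw [Complex.re_sum]
          exact (Finset.sum_congr rfl fun j _ => (hre_ofReal_mul _ _).symm)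
      _ = (((starRingEnd ℂ) (lam * v k)) * ∑ j, (A k j : ℂ) * v j).re := by rw [h2]
      _ = (((starRingEnd ℂ) (lam * v k)) * (lam * v k)).re := by rw [heig k]
      _ = ‖v k‖^2 := by rw [h1]; exact h3
  have hrle : ∀ j, r j ≤ ‖v k‖^2 := by
    intro j
    calc r j ≤ ‖(starRingEnd ℂ) (lam * v k) * v j‖ := by
          exact Complex.re_le_norm _
      _ = ‖lam * v k‖ * ‖v j‖ := by rw [norm_mul, RCLike.norm_conj]
      _ = ‖v k‖ * ‖v j‖ := by rw [norm_mul, hlam1, one_mul]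
      _ ≤ ‖v k‖ * ‖v k‖ := mul_le_mul_of_nonneg_left (hmax' j) (norm_nonneg _)
      _ = ‖v k‖^2 := (sq (‖v k‖)).symm
  have hzero : ∑ j, A k j * (‖v k‖^2 - r j) = 0 := by
    have : ∑ j, A k j * (‖v k‖^2 - r j)
        = (∑ j, A k j) * ‖v k‖^2 - ∑ j, A k j * r j := by
      rw [Finset.sum_mul, ← Finset.sum_sub_distrib]
      exact Finset.sum_congr rfl fun j _ => by ring
    rw [this, hs k, one_mul, hsum, sub_self]
  have hterm : A k k * (‖v k‖^2 - r k) = 0 := by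
    have := (Finset.sum_eq_zero_iff_of_nonneg
      (fun j _ => mul_nonneg (h0 k j) (by linarith [hrle j]))).mp hzero
    exact this k (Finset.mem_univ k)
  have hrk : r k = ‖v k‖^2 := by
    rcases mul_eq_zero.mp hterm with h | h
    · exact absurd h (ne_of_gt (hd k))
    · linarith
  -- r k = lam.re * ‖v k‖^2
  have hrk2 : r k = lam.re * ‖v k‖^2 := by
    have : (starRingEnd ℂ) (lam * v k) * v k
        = (starRingEnd ℂ) lam * ((Complex.normSq (v k) : ℝ) : ℂ) := by
      rw [map_mul]
      rw [mul_assoc, mul_comm ((starRingEnd ℂ) (v k)) (v k), Complex.mul_conj]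
    rw [hr]
    simp only [this]
    rw [mul_comm, hre_ofReal_mul]
    rw [Complex.conj_re, Complex.normSq_eq_norm_sq]
    ring
  have hre : lam.re = 1 := by
    have h2 : ‖v k‖^2 > 0 := by positivity
    nlinarith [hrk, hrk2]
  have hnormSq : lam.re * lam.re + lam.im * lam.im = 1 := by
    have := Complex.normSq_eq_norm_sq lam
    rw [hlam1] at this
    have h2 := Complex.normSq_apply lam
    nlinarith [this, h2]
  have him : lam.im = 0 := by nlinarith [hnormSq, hre]
  exact Complex.ext (by rw [hre]; rfl) (by rw [him]; rfl)

/-- the synthesis operator -/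
def Bmap (n : ℕ) : (Fin (n+1) → ℂ) →L[ℂ] E1 :=
  LinearMap.toContinuousLinearMap
    { toFun := fun c => ∑ k : Fin (n+1), c k • bfun n (k : ℕ)
      map_add' := fun c d => by
        simp [add_smul, Finset.sum_add_distrib]
      map_smul' := fun a c => by
        simp [smul_smul, Finset.smul_sum] }

lemma Bmap_apply (n : ℕ) (c : Fin (n+1) → ℂ) :
    Bmap n c = ∑ k : Fin (n+1), c k • bfun n (k : ℕ) := rfl

/-- the analysis operator -/
def Phi (n : ℕ) : E1 →L[ℂ] (Fin (n+1) → ℂ) :=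
  ContinuousLinearMap.pi (fun k : Fin (n+1) => phi n (k : ℕ))

lemma Phi_apply (n : ℕ) (f : E1) (k : Fin (n+1)) : Phi n f k = phi n (k : ℕ) f := rfl

lemma Phi_Bmap (n : ℕ) (c : Fin (n+1) → ℂ) (k : Fin (n+1)) :
    Phi n (Bmap n c) k = ∑ j : Fin (n+1), (Amat n (k : ℕ) (j : ℕ) : ℂ) * c j := by
  rw [Phi_apply, Bmap_apply, map_sum]
  refine Finset.sum_congr rfl fun j _ => ?_
  rw [_root_.map_smul, phi_bfun, smul_eq_mul, mul_comm]

lemma coeFn_finset_sum {ι : Type*} (s : Finset ι) (g : ι → E1) :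
    ((∑ i ∈ s, g i : E1) : ℝ → ℂ) =ᵐ[μ01] fun x => ∑ i ∈ s, (g i : ℝ → ℂ) x := by
  classical
  induction s using Finset.induction_on with
  | empty => simp only [Finset.sum_empty]; exact Lp.coeFn_zero ℂ 1 μ01
  | @insert a s' hni ih =>
      have h1 := Lp.coeFn_add (g a) (∑ i ∈ s', g i)
      rw [Finset.sum_insert hni]
      filter_upwards [h1, ih] with x hx1 hx2
      rw [hx1]
      simp only [Pi.add_apply, hx2, Finset.sum_insert hni]

/-- representation of the Kantorovič operator -/
lemma T_eq (n : ℕ)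
    (T : Lp ℂ 1 (volume.restrict (Set.Icc (0 : ℝ) 1)) →L[ℂ]
          Lp ℂ 1 (volume.restrict (Set.Icc (0 : ℝ) 1)))
    (hT : ∀ f : Lp ℂ 1 (volume.restrict (Set.Icc (0 : ℝ) 1)),
      ∀ᵐ x ∂(volume.restrict (Set.Icc (0 : ℝ) 1)),
        (T f : ℝ → ℂ) x = ((n : ℂ) + 1) * ∑ k ∈ Finset.range (n + 1),
          (n.choose k : ℂ) * (x : ℂ) ^ k * (1 - (x : ℂ)) ^ (n - k) *
            ∫ t in ((k : ℝ) / ((n : ℝ) + 1))..(((k : ℝ) + 1) / ((n : ℝ) + 1)),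
              (f : ℝ → ℂ) t ∂(volume.restrict (Set.Icc (0 : ℝ) 1))) :
    T = (Bmap n).comp (Phi n) := by
  refine ContinuousLinearMap.ext fun f => ?_
  apply Lp.ext (μ := μ01)
  have hsum := coeFn_finset_sum Finset.univ
    (fun k : Fin (n+1) => (phi n (k : ℕ) f) • bfun n (k : ℕ))
  have hcoe : ∀ᵐ x ∂μ01, ∀ k : Fin (n+1),
      (((phi n (k : ℕ) f) • bfun n (k : ℕ) : E1) : ℝ → ℂ) x
        = phi n (k : ℕ) f * pC n (k : ℕ) x := by
    rw [ae_all_iff]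
    intro k
    filter_upwards [Lp.coeFn_smul (phi n (k : ℕ) f) (bfun n (k : ℕ)), bfun_coe n (k : ℕ)]
      with x ha hb
    rw [ha, Pi.smul_apply, hb, smul_eq_mul]
  filter_upwards [hT f, hsum, hcoe] with x hx1 hx2 hx3
  rw [hx1]
  have hBP : ((Bmap n).comp (Phi n)) f
      = ∑ k : Fin (n+1), (phi n (k : ℕ) f) • bfun n (k : ℕ) := by
    rw [ContinuousLinearMap.comp_apply, Bmap_apply]
    rfl
  rw [hBP, hx2]
  rw [Finset.sum_congr rfl (fun k (_ : k ∈ Finset.univ) => hx3 k)]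
  rw [Fin.sum_univ_eq_sum_range (fun k => phi n k f * pC n k x)]
  rw [Finset.mul_sum]
  refine Finset.sum_congr rfl fun k _ => ?_
  rw [phi_eq_interval n k f, pC]
  ring

end KantAux

end KantAux

/-- Let `T_n` be the Kantorovič operator regarded as a continuous
linear endomorphism of `L¹([0,1], ℂ)`, i.e., `T_n f` is (the class of) the
function `x ↦ (n+1) ∑_{k=0}^n C(n,k) x^k (1-x)^{n-k} ∫_{k/(n+1)}^{(k+1)/(n+1)} f`.
Then `σ(T_n) ⊆ {λ : |λ| < 1} ∪ {1}`. -/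
theorem kantorovich_spectrum_subset (n : ℕ)
    (T : Lp ℂ 1 (volume.restrict (Set.Icc (0 : ℝ) 1)) →L[ℂ]
          Lp ℂ 1 (volume.restrict (Set.Icc (0 : ℝ) 1)))
    (hT : ∀ f : Lp ℂ 1 (volume.restrict (Set.Icc (0 : ℝ) 1)),
      ∀ᵐ x ∂(volume.restrict (Set.Icc (0 : ℝ) 1)),
        (T f : ℝ → ℂ) x = ((n : ℂ) + 1) * ∑ k ∈ Finset.range (n + 1),
          (n.choose k : ℂ) * (x : ℂ) ^ k * (1 - (x : ℂ)) ^ (n - k) *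
            ∫ t in ((k : ℝ) / ((n : ℝ) + 1))..(((k : ℝ) + 1) / ((n : ℝ) + 1)),
              (f : ℝ → ℂ) t ∂(volume.restrict (Set.Icc (0 : ℝ) 1))) :
    spectrum ℂ T ⊆ {z : ℂ | ‖z‖ < 1} ∪ {1} := by
  classical
  intro lam hlam
  by_contra hmem
  simp only [Set.mem_union, Set.mem_setOf_eq, Set.mem_singleton_iff, not_or] at hmem
  obtain ⟨hnorm, hne1⟩ := hmem
  push_neg at hnorm
  have hlam0 : lam ≠ 0 := by
    intro h
    rw [h, norm_zero] at hnorm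
    linarith
  have hTeq : T = (KantAux.Bmap n).comp (KantAux.Phi n) := KantAux.T_eq n T hT
  -- the finite-dimensional endomorphism `lam • id - Φ ∘ B`
  set LL : (Fin (n+1) → ℂ) →ₗ[ℂ] (Fin (n+1) → ℂ) :=
    lam • LinearMap.id - (((KantAux.Phi n).comp (KantAux.Bmap n) :
      (Fin (n+1) → ℂ) →L[ℂ] (Fin (n+1) → ℂ)) : (Fin (n+1) → ℂ) →ₗ[ℂ] (Fin (n+1) → ℂ))
    with hLL
  have hLLapply : ∀ c, LL c = lam • c - KantAux.Phi n (KantAux.Bmap n c) := by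
    intro c
    simp [hLL, LinearMap.sub_apply, LinearMap.smul_apply]
  have hinj : Function.Injective LL := by
    rw [injective_iff_map_eq_zero]
    intro v hv0
    by_contra hvne
    have heig : ∀ k : Fin (n+1),
        ∑ j : Fin (n+1), ((KantAux.Amat n (k : ℕ) (j : ℕ) : ℝ) : ℂ) * v j = lam * v k := by
      intro k
      have h1 : lam • v - KantAux.Phi n (KantAux.Bmap n v) = 0 := by
        rw [← hLLapply]; exact hv0
      have h2 : KantAux.Phi n (KantAux.Bmap n v) k = (lam • v) k := by
        have := congrFun h1 k
        simp only [Pi.sub_apply, Pi.zero_apply, sub_eq_zero] at this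
        exact this.symm
      rw [← KantAux.Phi_Bmap n v k, h2, Pi.smul_apply, smul_eq_mul]
    have := KantAux.perron n (fun k j => KantAux.Amat n (k : ℕ) (j : ℕ))
      (fun k j => KantAux.Amat_nonneg n _ _)
      (fun k => KantAux.Amat_diag_pos n _ (Nat.lt_succ_iff.mp k.isLt))
      (fun k => by
        rw [Fin.sum_univ_eq_sum_range (fun j => KantAux.Amat n (k : ℕ) j)]
        exact KantAux.Amat_row_sum n _ (Nat.lt_succ_iff.mp k.isLt))
      hnorm hvne heig
    exact hne1 this
  have hsurj : Function.Surjective LL := LinearMap.injective_iff_surjective.mp hinj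
  set e : (Fin (n+1) → ℂ) ≃ₗ[ℂ] (Fin (n+1) → ℂ) :=
    LinearEquiv.ofBijective LL ⟨hinj, hsurj⟩ with he
  set M : (Fin (n+1) → ℂ) →L[ℂ] (Fin (n+1) → ℂ) :=
    LinearMap.toContinuousLinearMap (e.symm : (Fin (n+1) → ℂ) →ₗ[ℂ] (Fin (n+1) → ℂ))
    with hM
  have hMapp : ∀ y, M y = e.symm y := fun y => rfl
  have hM1 : ∀ x, M (lam • x - KantAux.Phi n (KantAux.Bmap n x)) = x := by
    intro x
    rw [← hLLapply, hMapp]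
    exact e.symm_apply_apply x
  have hM2 : ∀ y, lam • M y - KantAux.Phi n (KantAux.Bmap n (M y)) = y := by
    intro y
    rw [hMapp, ← hLLapply]
    exact e.apply_symm_apply y
  -- explicit resolvent
  set R : KantAux.E1 →L[ℂ] KantAux.E1 :=
    lam⁻¹ • ((1 : KantAux.E1 →L[ℂ] KantAux.E1)
      + (KantAux.Bmap n).comp (M.comp (KantAux.Phi n))) with hR
  have hRapp : ∀ f : KantAux.E1,
      R f = lam⁻¹ • (f + KantAux.Bmap n (M (KantAux.Phi n f))) := by
    intro f
    simp [hR, ContinuousLinearMap.smul_apply, ContinuousLinearMap.add_apply,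
      ContinuousLinearMap.comp_apply]
  have halg : ∀ g : KantAux.E1,
      (algebraMap ℂ (KantAux.E1 →L[ℂ] KantAux.E1) lam) g = lam • g := by
    intro g
    rw [Algebra.algebraMap_eq_smul_one]
    simp
  have h1 : (algebraMap ℂ (KantAux.E1 →L[ℂ] KantAux.E1) lam - T) * R = 1 := by
    refine ContinuousLinearMap.ext fun f => ?_
    rw [ContinuousLinearMap.mul_apply, ContinuousLinearMap.one_apply,
      ContinuousLinearMap.sub_apply, halg, hRapp, hTeq]
    rw [ContinuousLinearMap.comp_apply]
    have hPhi : KantAux.Phi n (lam⁻¹ • (f + KantAux.Bmap n (M (KantAux.Phi n f))))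
        = M (KantAux.Phi n f) := by
      rw [_root_.map_smul, map_add]
      have hAC : KantAux.Phi n (KantAux.Bmap n (M (KantAux.Phi n f)))
          = lam • M (KantAux.Phi n f) - KantAux.Phi n f := by
        have h' := sub_eq_iff_eq_add.mp (hM2 (KantAux.Phi n f))
        rw [h']
        abel
      rw [hAC]
      rw [show KantAux.Phi n f + (lam • M (KantAux.Phi n f) - KantAux.Phi n f)
          = lam • M (KantAux.Phi n f) from by abel]
      rw [smul_smul, inv_mul_cancel₀ hlam0, one_smul]
    rw [hPhi]
    rw [smul_smul, mul_inv_cancel₀ hlam0, one_smul]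
    abel
  have h2 : R * (algebraMap ℂ (KantAux.E1 →L[ℂ] KantAux.E1) lam - T) = 1 := by
    refine ContinuousLinearMap.ext fun f => ?_
    rw [ContinuousLinearMap.mul_apply, ContinuousLinearMap.one_apply,
      ContinuousLinearMap.sub_apply, halg, hTeq, ContinuousLinearMap.comp_apply]
    rw [hRapp]
    have hPhi : KantAux.Phi n (lam • f - KantAux.Bmap n (KantAux.Phi n f))
        = lam • KantAux.Phi n f - KantAux.Phi n (KantAux.Bmap n (KantAux.Phi n f)) := by
      rw [map_sub, _root_.map_smul]
    have hMv : M (KantAux.Phi n (lam • f - KantAux.Bmap n (KantAux.Phi n f)))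
        = KantAux.Phi n f := by
      rw [hPhi]
      exact hM1 (KantAux.Phi n f)
    rw [hMv]
    rw [show lam • f - KantAux.Bmap n (KantAux.Phi n f) + KantAux.Bmap n (KantAux.Phi n f)
        = lam • f from by abel]
    rw [smul_smul, inv_mul_cancel₀ hlam0, one_smul]
  have hunit : IsUnit (algebraMap ℂ (KantAux.E1 →L[ℂ] KantAux.E1) lam - T) :=
    ⟨⟨algebraMap ℂ (KantAux.E1 →L[ℂ] KantAux.E1) lam - T, R, h1, h2⟩, rfl⟩
  exact (spectrum.notMem_iff.mpr hunit) hlam
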